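/- arXiv:1710.05761 — 2 statements merged into one kernel-verified Lean document; each statement's English description precedes it below -/
import Mathlib

section
/- Let K be a field of characteristic p>0 and N a finitely generated, semipositive binoid with dim N = dim K[N]. Suppose e_HK(𝔫,N) = lim_{q→∞} #(N/[q]𝔫)/q^{dim N} exists, where 𝔫 is an N₊-primary ideal. Then lim_{e→∞} dim_K( K[N]/K[𝔫]^{[p^e]} )/p^{e·dim K[N]} exists and equals e_HK(𝔫,N); in particular this Hilbert-Kunz multiplicity of the binoid algebra is independent of the (positive) characteristic of K. -/
/-- A binoid: a commutative monoid (written additively) with an absorbing element `infty`. -/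
class Binoid (N : Type*) extends AddCommMonoid N where
  infty : N
  add_infty : ∀ x : N, x + infty = infty

namespace Binoid

variable {N : Type*} [Binoid N]

theorem infty_add (x : N) : (infty : N) + x = infty := by
  rw [add_comm]; exact add_infty x

/-- `I ⊆ N` is an ideal of the binoid `N`. -/
def IsIdeal (I : Set N) : Prop :=
  (infty : N) ∈ I ∧ ∀ a ∈ I, ∀ n : N, n + a ∈ I

/-- The ideal generated by a subset `S` of a binoid. -/
def span (S : Set N) : Set N :=
  insert (infty : N) {x : N | ∃ n : N, ∃ s ∈ S, x = n + s}

/-- The `q`-th Frobenius sum `[q]I` of an ideal: the ideal generated by `{q • a | a ∈ I}`. -/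
def frob (q : ℕ) (I : Set N) : Set N :=
  span {x : N | ∃ a ∈ I, x = q • a}

/-- The set of units of a binoid. -/
def unitSet (N : Type*) [Binoid N] : Set N := {a : N | ∃ b : N, a + b = 0}

/-- `N₊`, the set (ideal) of non-units of a binoid. -/
def plusSet (N : Type*) [Binoid N] : Set N := (unitSet N)ᶜ

/-- A binoid is semipositive if its unit group is finite. -/
def Semipositive (N : Type*) [Binoid N] : Prop := (unitSet N).Finite

/-- A binoid is positive if `0` is its only unit. -/
def Positive (N : Type*) [Binoid N] : Prop := unitSet N = {0}

/-- A binoid is finitely generated if it is generated, as a (commutative) monoid,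
by finitely many elements. -/
def FG (N : Type*) [Binoid N] : Prop :=
  ∃ s : Finset N, AddSubmonoid.closure (s : Set N) = ⊤

/-- A binoid is cancellative if `a + c = b + c` with `c ≠ ∞` implies `a = b`. -/
def Cancellative (N : Type*) [Binoid N] : Prop :=
  ∀ a b c : N, c ≠ infty → a + c = b + c → a = b

/-- A binoid is reduced if `∞` is its only nilpotent element. -/
def Reduced (N : Type*) [Binoid N] : Prop :=
  ∀ (a : N) (n : ℕ), 0 < n → n • a = (infty : N) → a = infty

/-- A binoid is torsion-free if `n • a = n • b` for some `n ≥ 1` implies `a = b`. -/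
def TorsionFree (N : Type*) [Binoid N] : Prop :=
  ∀ (a b : N) (n : ℕ), 0 < n → n • a = n • b → a = b

/-- A binoid is integral if `N ∖ {∞}` is a submonoid. -/
def Integral (N : Type*) [Binoid N] : Prop :=
  (0 : N) ≠ infty ∧ ∀ a b : N, a + b = (infty : N) → a = infty ∨ b = infty

/-- The radical of an ideal of a binoid. -/
def rad (I : Set N) : Set N := {a : N | ∃ k : ℕ, 0 < k ∧ k • a ∈ I}

/-- An `N₊`-primary ideal: an ideal whose radical is `N₊`. -/
def IsPrimaryIdeal (I : Set N) : Prop := IsIdeal I ∧ rad I = plusSet N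

/-- A prime ideal of a binoid: a proper ideal whose complement is closed under addition. -/
def IsPrime (I : Set N) : Prop :=
  IsIdeal I ∧ I ≠ Set.univ ∧ ∀ a b : N, a ∉ I → b ∉ I → a + b ∉ I

/-- A minimal prime ideal of a binoid. -/
def IsMinimalPrime (I : Set N) : Prop :=
  IsPrime I ∧ ∀ J : Set N, IsPrime J → J ⊆ I → J = I

/-- The set of lengths of strictly increasing chains of prime ideals of `N`. -/
def dimSet (N : Type*) [Binoid N] : Set ℕ :=
  {n : ℕ | ∃ c : Fin (n + 1) → Set N, (∀ i, IsPrime (c i)) ∧ StrictMono c}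

/-- The combinatorial dimension of a binoid: the supremum of the lengths of strictly
increasing chains of prime ideals. -/
noncomputable def dim (N : Type*) [Binoid N] : ℕ := sSup (dimSet N)

/-- `#(N/[q]𝔫)`: the number of elements of the binoid `N/[q]𝔫`, not counting `∞`;
equivalently, the number of elements of `N` outside of the ideal `[q]𝔫`. -/
noncomputable def hkOn (I : Set N) (q : ℕ) : ℕ := Set.ncard ((frob q I)ᶜ)

/-- The Hilbert–Kunz multiplicity of an (`N₊`-primary) ideal `𝔫` on `N` is `L`:
the limit of `#(N/[q]𝔫)/q^(dim N)` as `q → ∞` is `L`. -/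
def IsHKMultOn (I : Set N) (L : ℝ) : Prop :=
  Filter.Tendsto (fun q : ℕ => (hkOn I q : ℝ) / (q : ℝ) ^ dim N) Filter.atTop (nhds L)

/-- The Hilbert–Kunz multiplicity of the binoid `N` is `L`. -/
def IsHKMult (N : Type*) [Binoid N] (L : ℝ) : Prop :=
  IsHKMultOn (plusSet N) L

/-- The sum `I + J` of two subsets of a binoid. -/
def idealSum (I J : Set N) : Set N := {x : N | ∃ a ∈ I, ∃ b ∈ J, x = a + b}


/-- The binoid algebra `K[N]`: the monoid algebra of `N` over `K` modulo the ideal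
generated by `X^∞`. -/
noncomputable def binAlg (K : Type*) [CommRing K] (N : Type*) [Binoid N] : Type _ :=
  AddMonoidAlgebra K N ⧸
    Ideal.span {AddMonoidAlgebra.single (infty : N) (1 : K)}

noncomputable instance (K : Type*) [CommRing K] (N : Type*) [Binoid N] :
    CommRing (binAlg K N) :=
  inferInstanceAs (CommRing (AddMonoidAlgebra K N ⧸
    Ideal.span {AddMonoidAlgebra.single (infty : N) (1 : K)}))

noncomputable instance (K : Type*) [CommRing K] (N : Type*) [Binoid N] :
    Algebra K (binAlg K N) :=
  inferInstanceAs (Algebra K (AddMonoidAlgebra K N ⧸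
    Ideal.span {AddMonoidAlgebra.single (infty : N) (1 : K)}))

/-- The monomial `X^a` in the binoid algebra `K[N]`. -/
noncomputable def monomial (K : Type*) [CommRing K] (a : N) : binAlg K N :=
  Ideal.Quotient.mk _ (AddMonoidAlgebra.single a (1 : K))

/-- For an ideal `I` of the binoid `N`, the ideal `K[I]` of `K[N]` spanned by the
monomials `X^a`, `a ∈ I`. -/
noncomputable def idealK (K : Type*) [CommRing K] (I : Set N) : Ideal (binAlg K N) :=
  Ideal.span ((fun a => monomial K a) '' I)

/-- The Frobenius power `J^{[q]}` of an ideal in a commutative ring: the ideal generated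
by the `q`-th powers of the elements of `J`. -/
def frobPow {R : Type*} [CommRing R] (J : Ideal R) (q : ℕ) : Ideal R :=
  Ideal.span {x : R | ∃ y ∈ J, x = y ^ q}


end Binoid

namespace BinoidProof

open Binoid

variable {K : Type*} [Field K] {N : Type*} [Binoid N]

theorem isIdeal_span (S : Set N) : IsIdeal (Binoid.span S) := by
  constructor
  · exact Set.mem_insert _ _
  · rintro a (rfl | ⟨m, s, hs, rfl⟩) n
    · exact Or.inl (add_infty n)
    · exact Or.inr ⟨n + m, s, hs, (add_assoc n m s).symm⟩

/-- The ideal of the monoid algebra supported on a binoid ideal. -/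
def suppIdeal (K : Type*) [Field K] {N : Type*} [Binoid N] {J : Set N}
    (hJ : IsIdeal J) : Ideal (AddMonoidAlgebra K N) where
  carrier := {f | ↑(Finsupp.support f.coeff) ⊆ J}
  zero_mem' := by simp
  add_mem' := by
    classical
    intro f g hf hg a ha
    have := Finsupp.support_add (g₁ := f.coeff) (g₂ := g.coeff) ha
    rcases Finset.mem_union.1 this with h | h
    · exact hf h
    · exact hg h
  smul_mem' := by
    classical
    intro c f hf a ha
    rw [smul_eq_mul] at ha
    have := AddMonoidAlgebra.support_coeff_mul_subset c f ha
    rcases Finset.mem_add.1 this with ⟨x, hx, y, hy, rfl⟩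
    exact hJ.2 y (hf hy) x

theorem mem_suppIdeal {J : Set N} (hJ : IsIdeal J) {f : AddMonoidAlgebra K N} :
    f ∈ suppIdeal K hJ ↔ ↑(Finsupp.support f.coeff) ⊆ J := Iff.rfl

theorem span_image_single {J : Set N} (hJ : IsIdeal J) :
    Ideal.span ((fun a => AddMonoidAlgebra.single a (1 : K)) '' J) = suppIdeal K hJ := by
  apply le_antisymm
  · rw [Ideal.span_le]
    rintro _ ⟨a, ha, rfl⟩
    intro x hx
    rw [show Finsupp.support (AddMonoidAlgebra.single a (1 : K)).coeff = {a} from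
      Finsupp.support_single_ne_zero a one_ne_zero] at hx
    simp only [Finset.coe_singleton, Set.mem_singleton_iff] at hx
    subst hx; exact ha
  · intro f hf
    rw [← AddMonoidAlgebra.sum_coeff_single f]
    apply Submodule.sum_mem
    intro a ha
    have h1 : AddMonoidAlgebra.single a (f.coeff a)
        = AddMonoidAlgebra.single (0 : N) (f.coeff a) * AddMonoidAlgebra.single a (1 : K) := by
      rw [AddMonoidAlgebra.single_mul_single, zero_add, mul_one]
    rw [h1]
    exact Ideal.mul_mem_left _ _ (Ideal.subset_span ⟨a, hf ha, rfl⟩)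

theorem isIdeal_singleton_infty : IsIdeal ({infty} : Set N) := by
  constructor
  · rfl
  · rintro a rfl n
    exact add_infty n

theorem span_single_infty :
    Ideal.span {AddMonoidAlgebra.single (infty : N) (1 : K)}
      = suppIdeal K (isIdeal_singleton_infty (N := N)) := by
  rw [← span_image_single, Set.image_singleton]


theorem suppIdeal_mono {J J' : Set N} (hJ : IsIdeal J) (hJ' : IsIdeal J') (h : J ⊆ J') :
    suppIdeal K hJ ≤ suppIdeal K hJ' := fun f hf => ((mem_suppIdeal hJ).1 hf).trans h

theorem idealK_eq_map {J : Set N} (hJ : IsIdeal J) :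
    idealK K J = Ideal.map
      (Ideal.Quotient.mk (Ideal.span {AddMonoidAlgebra.single (infty : N) (1 : K)}))
      (suppIdeal K hJ) := by
  rw [← span_image_single hJ, Ideal.map_span, Set.image_image]
  rfl

theorem mk_mem_idealK_iff {J : Set N} (hJ : IsIdeal J) (f : AddMonoidAlgebra K N) :
    (Ideal.Quotient.mk (Ideal.span {AddMonoidAlgebra.single (infty : N) (1 : K)}) f
      ∈ idealK K J) ↔ ↑(Finsupp.support f.coeff) ⊆ J := by
  rw [idealK_eq_map hJ]
  change f ∈ Ideal.comap (Ideal.Quotient.mk (Ideal.span {AddMonoidAlgebra.single (infty : N) (1 : K)}))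
    (Ideal.map (Ideal.Quotient.mk (Ideal.span {AddMonoidAlgebra.single (infty : N) (1 : K)}))
      (suppIdeal K hJ)) ↔ _
  rw [Ideal.comap_map_of_surjective _ Ideal.Quotient.mk_surjective]
  have h1 : Ideal.comap
      (Ideal.Quotient.mk (Ideal.span {AddMonoidAlgebra.single (infty : N) (1 : K)})) ⊥
      = Ideal.span {AddMonoidAlgebra.single (infty : N) (1 : K)} := by
    rw [← RingHom.ker_eq_comap_bot, Ideal.mk_ker]
  have h2 : Ideal.span {AddMonoidAlgebra.single (infty : N) (1 : K)} ≤ suppIdeal K hJ := by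
    rw [span_single_infty]
    refine suppIdeal_mono _ hJ ?_
    intro x hx
    rw [Set.mem_singleton_iff] at hx
    subst hx; exact hJ.1
  rw [h1, sup_eq_left.2 h2]
  exact Iff.rfl

noncomputable def quotEquiv {J : Set N} (hJ : IsIdeal J) :
    (↥(Jᶜ) →₀ K) ≃ₗ[K] (binAlg K N ⧸ idealK K J) := by
  classical
  let m1 : AddMonoidAlgebra K N →ₐ[K] binAlg K N :=
    Ideal.Quotient.mkₐ K (Ideal.span {AddMonoidAlgebra.single (infty : N) (1 : K)})
  let m2 : binAlg K N →ₐ[K] (binAlg K N ⧸ idealK K J) := Ideal.Quotient.mkₐ K (idealK K J)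
  let φ : (↥(Jᶜ) →₀ K) →ₗ[K] (binAlg K N ⧸ idealK K J) :=
    (m2.comp m1).toLinearMap.comp ((AddMonoidAlgebra.coeffLinearEquiv K).symm.toLinearMap.comp (Finsupp.lmapDomain K K (Subtype.val : ↥(Jᶜ) → N)))
  have hφ : ∀ g, φ g = Ideal.Quotient.mk (idealK K J)
      (Ideal.Quotient.mk (Ideal.span {AddMonoidAlgebra.single (infty : N) (1 : K)})
        (AddMonoidAlgebra.ofCoeff (Finsupp.mapDomain Subtype.val g))) := fun g => rfl
  have hinj : Function.Injective φ := by
    rw [← LinearMap.ker_eq_bot]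
    refine (Submodule.eq_bot_iff _).2 fun g hg => ?_
    rw [LinearMap.mem_ker, hφ] at hg
    replace hg := (mk_mem_idealK_iff hJ _).1 ((Ideal.Quotient.eq_zero_iff_mem (I := idealK K J)).1 hg)
    ext a
    by_contra hga
    have ha : (a : N) ∈ Finsupp.support (Finsupp.mapDomain (Subtype.val : ↥(Jᶜ) → N) g) := by
      rw [Finsupp.mapDomain_support_of_injective Subtype.val_injective]
      exact Finset.mem_image_of_mem _ (Finsupp.mem_support_iff.2 hga)
    exact a.2 (hg ha)
  have hsurj : Function.Surjective φ := by
    intro x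
    obtain ⟨y, rfl⟩ := Ideal.Quotient.mk_surjective x
    obtain ⟨f, rfl⟩ := Ideal.Quotient.mk_surjective y
    refine ⟨Finsupp.subtypeDomain (· ∈ Jᶜ) f.coeff, ?_⟩
    set h : AddMonoidAlgebra K N := AddMonoidAlgebra.ofCoeff (Finsupp.mapDomain (Subtype.val : ↥(Jᶜ) → N) (Finsupp.subtypeDomain (· ∈ Jᶜ) f.coeff))
      with hh
    have hsub : Ideal.Quotient.mk (Ideal.span {AddMonoidAlgebra.single (infty : N) (1 : K)})
        (h - f) = Ideal.Quotient.mk _ h - Ideal.Quotient.mk _ f := RingHom.map_sub _ _ _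
    rw [hφ]
    refine Ideal.Quotient.eq.2 (hsub ▸ (mk_mem_idealK_iff hJ (h - f)).2 ?_)
    intro a ha
    by_contra haJ
    have hval : h.coeff a = f.coeff a := by
      rw [hh]
      have := Finsupp.mapDomain_apply Subtype.val_injective
        (Finsupp.subtypeDomain (· ∈ Jᶜ) f.coeff) ⟨a, haJ⟩
      simpa [Finsupp.subtypeDomain_apply, AddMonoidAlgebra.coeff_ofCoeff] using this
    rw [Finset.mem_coe, Finsupp.mem_support_iff] at ha
    exact ha (by rw [AddMonoidAlgebra.coeff_sub, Finsupp.sub_apply, hval, sub_self])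
  exact LinearEquiv.ofBijective φ ⟨hinj, hsurj⟩

theorem finrank_finsupp_self' (ι : Type*) : Module.finrank K (ι →₀ K) = Nat.card ι := by
  rw [Module.finrank, rank_finsupp_self, Cardinal.toNat_lift, Nat.card]

theorem finrank_quot {J : Set N} (hJ : IsIdeal J) :
    Module.finrank K (binAlg K N ⧸ idealK K J) = Set.ncard Jᶜ := by
  rw [← (quotEquiv (K := K) hJ).finrank_eq, finrank_finsupp_self', Nat.card_coe_set_eq]


theorem monomial_infty : (monomial K (infty : N) : binAlg K N) = 0 :=
  Ideal.Quotient.eq_zero_iff_mem.2 (Ideal.subset_span rfl)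

theorem monomial_add (a b : N) :
    (monomial K (a + b) : binAlg K N) = monomial K a * monomial K b := by
  have h : (AddMonoidAlgebra.single (a + b) (1 : K))
      = AddMonoidAlgebra.single a (1 : K) * AddMonoidAlgebra.single b (1 : K) := by
    rw [AddMonoidAlgebra.single_mul_single, one_mul]
  show Ideal.Quotient.mk _ (AddMonoidAlgebra.single (a + b) (1 : K)) = _
  rw [h, RingHom.map_mul]
  rfl

theorem monomial_nsmul (a : N) (n : ℕ) :
    (monomial K (n • a) : binAlg K N) = (monomial K a) ^ n := by
  induction n with
  | zero =>
    rw [zero_smul, pow_zero]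
    show Ideal.Quotient.mk _ (AddMonoidAlgebra.single (0 : N) (1 : K)) = 1
    rw [← AddMonoidAlgebra.one_def, RingHom.map_one]
  | succ n ih =>
    rw [succ_nsmul, monomial_add, ih, pow_succ]

theorem idealK_span (S : Set N) :
    idealK K (Binoid.span S) = Ideal.span ((fun a => (monomial K a : binAlg K N)) '' S) := by
  apply le_antisymm
  · rw [idealK, Ideal.span_le]
    rintro _ ⟨x, hx, rfl⟩
    rcases hx with rfl | ⟨n, s, hs, rfl⟩
    · show (monomial K (infty : N) : binAlg K N) ∈ _
      rw [monomial_infty]; exact zero_mem _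
    · show (monomial K (n + s) : binAlg K N) ∈ _
      rw [monomial_add]
      exact Ideal.mul_mem_left _ _ (Ideal.subset_span ⟨s, hs, rfl⟩)
  · rw [Ideal.span_le]
    rintro _ ⟨s, hs, rfl⟩
    exact Ideal.subset_span ⟨s, Or.inr ⟨0, s, hs, (zero_add s).symm⟩, rfl⟩

theorem pow_mem_span_pow {R : Type*} [CommRing R] (p : ℕ) [Fact p.Prime] [CharP R p] (e : ℕ)
    (S : Set R) {y : R} (hy : y ∈ Ideal.span S) :
    y ^ p ^ e ∈ Ideal.span ((fun z => z ^ p ^ e) '' S) := by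
  induction hy using Submodule.span_induction with
  | mem x hx => exact Ideal.subset_span ⟨x, hx, rfl⟩
  | zero =>
    rw [zero_pow (pow_ne_zero e (Fact.out (p := p.Prime)).ne_zero)]
    exact zero_mem _
  | add x y hx hy ihx ihy => rw [add_pow_char_pow]; exact add_mem ihx ihy
  | smul a x hx ih => rw [smul_eq_mul, mul_pow]; exact Ideal.mul_mem_left _ _ ih

theorem frobPow_span {R : Type*} [CommRing R] (p : ℕ) [Fact p.Prime] [CharP R p] (e : ℕ)
    (S : Set R) : frobPow (Ideal.span S) (p ^ e) = Ideal.span ((fun z => z ^ p ^ e) '' S) := by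
  refine le_antisymm (Ideal.span_le.2 ?_) (Ideal.span_le.2 ?_)
  · rintro _ ⟨y, hy, rfl⟩
    exact pow_mem_span_pow p e S hy
  · rintro _ ⟨s, hs, rfl⟩
    exact Ideal.subset_span ⟨s, Ideal.subset_span hs, rfl⟩

theorem frobPow_idealK (p : ℕ) [Fact p.Prime] [CharP (binAlg K N) p] (e : ℕ) (I : Set N) :
    frobPow (idealK K I) (p ^ e) = idealK K (frob (p ^ e) I) := by
  have h1 : frobPow (idealK K I) (p ^ e)
      = Ideal.span ((fun z => z ^ p ^ e) '' ((fun a => (monomial K a : binAlg K N)) '' I)) :=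
    frobPow_span p e _
  rw [h1, Set.image_image, frob, idealK_span]
  congr 1
  ext x
  constructor
  · rintro ⟨a, ha, rfl⟩
    exact ⟨(p ^ e) • a, ⟨a, ha, rfl⟩, monomial_nsmul a (p ^ e)⟩
  · rintro ⟨z, ⟨a, ha, rfl⟩, rfl⟩
    exact ⟨a, ha, (monomial_nsmul a (p ^ e)).symm⟩

theorem binAlg_nontrivial (h0 : (0 : N) ≠ infty) : Nontrivial (binAlg K N) := by
  refine nontrivial_of_ne 1 0 fun h => ?_
  have h1 : (1 : AddMonoidAlgebra K N)
      ∈ Ideal.span {AddMonoidAlgebra.single (infty : N) (1 : K)} := by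
    rw [← Ideal.Quotient.eq_zero_iff_mem, RingHom.map_one]
    exact h
  rw [span_single_infty] at h1
  have h2 : (0 : N) ∈ Finsupp.support (1 : AddMonoidAlgebra K N).coeff := by
    rw [AddMonoidAlgebra.one_def, AddMonoidAlgebra.coeff_single, Finsupp.support_single_ne_zero _ one_ne_zero]
    exact Finset.mem_singleton_self 0
  exact h0 (h1 h2)

end BinoidProof

open Binoid

/-- **Statement 4.** Let `K` be a field of characteristic `p > 0` and `N` a finitely
generated, semipositive binoid with `dim N = dim K[N]`. Suppose
`e_HK(𝔫,N) = lim_{q→∞} #(N/[q]𝔫)/q^(dim N)` exists, where `𝔫` is an `N₊`-primary ideal.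
Then `lim_{e→∞} dim_K(K[N]/K[𝔫]^{[pᵉ]})/pᵉ^(dim K[N])` exists and equals `e_HK(𝔫,N)`
(in particular it is independent of the positive characteristic of `K`). -/
theorem hk_multiplicity_binoid_algebra
    {K : Type*} [Field K] {N : Type*} [Binoid N]
    (p : ℕ) (hp : p.Prime) (hchar : CharP K p)
    (hfg : FG N) (hsp : Semipositive N)
    (hdim : (dim N : WithBot (WithTop ℕ)) = ringKrullDim (binAlg K N))
    (𝔫 : Set N) (h𝔫 : IsPrimaryIdeal 𝔫)
    (L : ℝ) (hL : IsHKMultOn 𝔫 L) :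
    Filter.Tendsto
      (fun e : ℕ =>
        (Module.finrank K (binAlg K N ⧸ frobPow (idealK K 𝔫) (p ^ e)) : ℝ)
          / ((p : ℝ) ^ e) ^ dim N)
      Filter.atTop (nhds L) := by
  classical
  have h0 : (0 : N) ≠ infty := by
    intro h
    have hmem : (infty : N) ∈ rad 𝔫 := ⟨1, one_pos, by simpa using h𝔫.1.1⟩
    rw [h𝔫.2] at hmem
    exact hmem ⟨0, by rw [add_zero, ← h]⟩
  haveI : Fact p.Prime := ⟨hp⟩
  haveI : Nontrivial (binAlg K N) := BinoidProof.binAlg_nontrivial h0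
  haveI : CharP (binAlg K N) p :=
    charP_of_injective_ringHom (algebraMap K (binAlg K N)).injective p
  have key : ∀ e : ℕ,
      Module.finrank K (binAlg K N ⧸ frobPow (idealK K 𝔫) (p ^ e)) = hkOn 𝔫 (p ^ e) := by
    intro e
    rw [BinoidProof.frobPow_idealK p e 𝔫,
      BinoidProof.finrank_quot (show IsIdeal (frob (p ^ e) 𝔫) from BinoidProof.isIdeal_span _)]
    rfl
  have hpow : Filter.Tendsto (fun e : ℕ => p ^ e) Filter.atTop Filter.atTop :=
    tendsto_pow_atTop_atTop_of_one_lt hp.one_lt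
  have hcomp := hL.comp hpow
  refine hcomp.congr fun e => ?_
  show (hkOn 𝔫 (p ^ e) : ℝ) / ((p ^ e : ℕ) : ℝ) ^ dim N = _
  rw [key e, Nat.cast_pow]
end

section
/- Let M and N be finitely generated semipositive binoids such that e_HK(M) and e_HK(N) exist. Then e_HK(M∧N) exists and e_HK(M∧N) = e_HK(M)·e_HK(N). -/
namespace Binoid

variable {N : Type*} [Binoid N]

/-- The additive congruence on `N` contracting the subset `I` to a point.
(When `I` is an ideal, the relation below is already a congruence.) -/
def quotCon (I : Set N) : AddCon N :=
  addConGen (fun a b => a = b ∨ (a ∈ I ∧ b ∈ I))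

/-- The residue class binoid `N/I`, obtained by contracting the ideal `I` to `∞`. -/
def BQuot (I : Set N) : Type _ := (quotCon I).Quotient

instance (I : Set N) : AddCommMonoid (BQuot I) :=
  inferInstanceAs (AddCommMonoid (quotCon I).Quotient)

/-- The canonical projection `N → N/I`. -/
def BQuot.mk (I : Set N) (a : N) : BQuot I := (a : (quotCon I).Quotient)

instance (I : Set N) : Binoid (BQuot I) :=
  { (inferInstance : AddCommMonoid (BQuot I)) with
    infty := BQuot.mk I infty
    add_infty := fun x => AddCon.induction_on x fun a => by
      show BQuot.mk I a + BQuot.mk I infty = BQuot.mk I infty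
      show ((a + infty : N) : (quotCon I).Quotient) = ((infty : N) : (quotCon I).Quotient)
      rw [add_infty] }

/-- The product of two binoids (with componentwise addition). -/
instance {M P : Type*} [Binoid M] [Binoid P] : Binoid (M × P) :=
  { (inferInstance : AddCommMonoid (M × P)) with
    infty := ((infty : M), (infty : P))
    add_infty := fun x => by
      show (x.1 + infty, x.2 + infty) = ((infty : M), (infty : P))
      rw [add_infty, add_infty] }

/-- The ideal of `M × P` consisting of pairs one of whose coordinates is `∞`. -/
def smashIdeal (M P : Type*) [Binoid M] [Binoid P] : Set (M × P) :=
  {x : M × P | x.1 = infty ∨ x.2 = infty}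

/-- The smash product `M ∧ P` of two binoids. -/
def Smash (M P : Type*) [Binoid M] [Binoid P] : Type _ :=
  BQuot (smashIdeal M P)

instance {M P : Type*} [Binoid M] [Binoid P] : AddCommMonoid (Smash M P) :=
  inferInstanceAs (AddCommMonoid (BQuot (smashIdeal M P)))

instance {M P : Type*} [Binoid M] [Binoid P] : Binoid (Smash M P) :=
  inferInstanceAs (Binoid (BQuot (smashIdeal M P)))

/-- The class of `(m, p)` in the smash product `M ∧ P`. -/
def Smash.mk {M P : Type*} [Binoid M] [Binoid P] (m : M) (p : P) : Smash M P :=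
  BQuot.mk (smashIdeal M P) (m, p)


section Aux
variable {N : Type*} [Binoid N]

theorem infty_mem_span (S : Set N) : (infty : N) ∈ span S := Set.mem_insert _ _

theorem infty_mem_frob (q : ℕ) (I : Set N) : (infty : N) ∈ frob q I := infty_mem_span _

theorem mem_frob_iff {q : ℕ} {I : Set N} {x : N} :
    x ∈ frob q I ↔ x = infty ∨ ∃ n : N, ∃ a ∈ I, x = n + q • a := by
  constructor
  · rintro (h | ⟨n, s, ⟨a, ha, rfl⟩, rfl⟩)
    · exact Or.inl h
    · exact Or.inr ⟨n, a, ha, rfl⟩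
  · rintro (rfl | ⟨n, a, ha, rfl⟩)
    · exact infty_mem_span _
    · exact Or.inr ⟨n, q • a, ⟨a, ha, rfl⟩, rfl⟩

/-- The congruence collapsing an ideal, described explicitly. -/
def idealCon (I : Set N) (hI : IsIdeal I) : AddCon N where
  r a b := a = b ∨ (a ∈ I ∧ b ∈ I)
  iseqv := ⟨fun _ => Or.inl rfl,
    fun h => by rcases h with rfl | ⟨h1, h2⟩; exacts [Or.inl rfl, Or.inr ⟨h2, h1⟩],
    fun h h' => by
      rcases h with rfl | ⟨h1, h2⟩
      · exact h'
      · rcases h' with rfl | ⟨h3, h4⟩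
        · exact Or.inr ⟨h1, h2⟩
        · exact Or.inr ⟨h1, h4⟩⟩
  add' := by
    rintro w x y z (rfl | ⟨h1, h2⟩) (rfl | ⟨h3, h4⟩)
    · exact Or.inl rfl
    · exact Or.inr ⟨hI.2 _ h3 _, hI.2 _ h4 _⟩
    · exact Or.inr ⟨by rw [add_comm]; exact hI.2 _ h1 _, by rw [add_comm]; exact hI.2 _ h2 _⟩
    · exact Or.inr ⟨by rw [add_comm]; exact hI.2 _ h1 _, by rw [add_comm]; exact hI.2 _ h2 _⟩

theorem quotCon_eq {I : Set N} (hI : IsIdeal I) : quotCon I = idealCon I hI :=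
  AddCon.addConGen_of_addCon (idealCon I hI)

theorem BQuot.mk_eq_mk {I : Set N} (hI : IsIdeal I) {a b : N} :
    BQuot.mk I a = BQuot.mk I b ↔ a = b ∨ (a ∈ I ∧ b ∈ I) := by
  show ((a : (quotCon I).Quotient)) = b ↔ _
  rw [AddCon.eq, quotCon_eq hI]
  rfl

theorem BQuot.mk_add (I : Set N) (a b : N) :
    BQuot.mk I (a + b) = BQuot.mk I a + BQuot.mk I b := rfl

theorem BQuot.mk_smul (I : Set N) (q : ℕ) (a : N) :
    BQuot.mk I (q • a) = q • BQuot.mk I a := by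
  induction q with
  | zero => simp [zero_nsmul]; rfl
  | succ n ih => rw [succ_nsmul, succ_nsmul, ← ih]; rfl

theorem BQuot.mk_surjective (I : Set N) : Function.Surjective (BQuot.mk I) :=
  fun x => AddCon.induction_on x fun a => ⟨a, rfl⟩

end Aux
section Aux2
variable {M P : Type*} [Binoid M] [Binoid P]

theorem smashIdeal_isIdeal : IsIdeal (smashIdeal M P) := by
  constructor
  · exact Or.inl rfl
  · rintro ⟨a1, a2⟩ (h | h) ⟨n1, n2⟩
    · exact Or.inl (by show n1 + a1 = infty; rw [show a1 = infty from h, add_infty])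
    · exact Or.inr (by show n2 + a2 = infty; rw [show a2 = infty from h, add_infty])

theorem Smash.mk_eq_mk {m m' : M} {p p' : P} :
    Smash.mk m p = Smash.mk m' p' ↔
      (m = m' ∧ p = p') ∨ ((m, p) ∈ smashIdeal M P ∧ (m', p') ∈ smashIdeal M P) := by
  show BQuot.mk (smashIdeal M P) (m, p) = BQuot.mk (smashIdeal M P) (m', p') ↔ _
  rw [BQuot.mk_eq_mk smashIdeal_isIdeal, Prod.mk.injEq]

theorem Smash.mk_surjective (z : Smash M P) : ∃ m p, z = Smash.mk m p := by
  obtain ⟨⟨m, p⟩, rfl⟩ := BQuot.mk_surjective (smashIdeal M P) z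
  exact ⟨m, p, rfl⟩

theorem Smash.mk_add (m m' : M) (p p' : P) :
    Smash.mk m p + Smash.mk m' p' = Smash.mk (m + m') (p + p') := rfl

theorem Smash.infty_def : (infty : Smash M P) = Smash.mk infty infty := rfl

theorem Smash.zero_def : (0 : Smash M P) = Smash.mk 0 0 := rfl

theorem Smash.mk_eq_infty {m : M} {p : P} (h : (m, p) ∈ smashIdeal M P) :
    Smash.mk m p = infty := by
  rw [Smash.infty_def, Smash.mk_eq_mk]
  exact Or.inr ⟨h, Or.inl rfl⟩

theorem Smash.mk_smul (q : ℕ) (m : M) (p : P) :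
    q • Smash.mk m p = Smash.mk (q • m) (q • p) := by
  show q • BQuot.mk (smashIdeal M P) (m, p) = BQuot.mk (smashIdeal M P) (q • m, q • p)
  rw [← BQuot.mk_smul]; rfl

theorem infty_not_unit {N : Type*} [Binoid N] (h0 : (0 : N) ≠ infty) :
    (infty : N) ∉ unitSet N := by
  rintro ⟨b, hb⟩
  exact h0 (by rw [← hb, infty_add])

theorem Smash.mk_unit_iff (h0M : (0 : M) ≠ infty) (h0P : (0 : P) ≠ infty)
    {m : M} {p : P} :
    Smash.mk m p ∈ unitSet (Smash M P) ↔ m ∈ unitSet M ∧ p ∈ unitSet P := by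
  constructor
  · rintro ⟨b, hb⟩
    obtain ⟨a, c, rfl⟩ := Smash.mk_surjective b
    rw [Smash.mk_add, Smash.zero_def, Smash.mk_eq_mk] at hb
    rcases hb with ⟨h1, h2⟩ | ⟨_, h | h⟩
    · exact ⟨⟨a, h1⟩, ⟨c, h2⟩⟩
    · exact absurd (show (0:M) = infty from h) h0M
    · exact absurd (show (0:P) = infty from h) h0P
  · rintro ⟨⟨a, ha⟩, ⟨c, hc⟩⟩
    exact ⟨Smash.mk a c, by rw [Smash.mk_add, ha, hc, Smash.zero_def]⟩

theorem Smash.mk_plus_iff (h0M : (0 : M) ≠ infty) (h0P : (0 : P) ≠ infty)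
    {m : M} {p : P} :
    Smash.mk m p ∈ plusSet (Smash M P) ↔ m ∈ plusSet M ∨ p ∈ plusSet P := by
  rw [plusSet, Set.mem_compl_iff, Smash.mk_unit_iff h0M h0P]
  by_cases hm : m ∈ unitSet M <;> by_cases hp : p ∈ unitSet P <;>
    simp [plusSet, hm, hp]

theorem Smash.mk_mem_frob_iff (h0M : (0 : M) ≠ infty) (h0P : (0 : P) ≠ infty)
    {q : ℕ} {m : M} {p : P} :
    Smash.mk m p ∈ frob q (plusSet (Smash M P)) ↔
      m ∈ frob q (plusSet M) ∨ p ∈ frob q (plusSet P) := by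
  constructor
  · intro h
    rw [mem_frob_iff] at h
    rcases h with h | ⟨n, a, ha, hx⟩
    · rw [Smash.infty_def, Smash.mk_eq_mk] at h
      rcases h with ⟨h1, _⟩ | ⟨h, _⟩
      · exact Or.inl (h1 ▸ infty_mem_frob q _)
      · rcases h with h | h
        · exact Or.inl ((show m = infty from h) ▸ infty_mem_frob q _)
        · exact Or.inr ((show p = infty from h) ▸ infty_mem_frob q _)
    · obtain ⟨n1, n2, rfl⟩ := Smash.mk_surjective n
      obtain ⟨a1, a2, rfl⟩ := Smash.mk_surjective a
      rw [Smash.mk_smul, Smash.mk_add, Smash.mk_eq_mk] at hx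
      rcases hx with ⟨h1, h2⟩ | ⟨h, _⟩
      · rw [Smash.mk_plus_iff h0M h0P] at ha
        rcases ha with ha | ha
        · exact Or.inl (mem_frob_iff.2 (Or.inr ⟨n1, a1, ha, h1⟩))
        · exact Or.inr (mem_frob_iff.2 (Or.inr ⟨n2, a2, ha, h2⟩))
      · rcases h with h | h
        · exact Or.inl ((show m = infty from h) ▸ infty_mem_frob q _)
        · exact Or.inr ((show p = infty from h) ▸ infty_mem_frob q _)
  · intro h
    rcases h with h | h
    · rw [mem_frob_iff] at h
      rcases h with rfl | ⟨n, a, ha, rfl⟩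
      · have h' : Smash.mk (infty : M) p = infty := Smash.mk_eq_infty (Or.inl rfl)
        rw [h']; exact infty_mem_frob q _
      · refine mem_frob_iff.2 (Or.inr ⟨Smash.mk n p, Smash.mk a 0, ?_, ?_⟩)
        · rw [Smash.mk_plus_iff h0M h0P]; exact Or.inl ha
        · rw [Smash.mk_smul, Smash.mk_add, smul_zero, add_zero]
    · rw [mem_frob_iff] at h
      rcases h with rfl | ⟨n, a, ha, rfl⟩
      · have h' : Smash.mk m (infty : P) = infty := Smash.mk_eq_infty (Or.inr rfl)
        rw [h']; exact infty_mem_frob q _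
      · refine mem_frob_iff.2 (Or.inr ⟨Smash.mk m n, Smash.mk 0 a, ?_, ?_⟩)
        · rw [Smash.mk_plus_iff h0M h0P]; exact Or.inr ha
        · rw [Smash.mk_smul, Smash.mk_add, smul_zero, add_zero]

end Aux2
section Aux3
variable {M P : Type*} [Binoid M] [Binoid P]

theorem ncard_prod_set {α β : Type*} (A : Set α) (B : Set β) :
    (A ×ˢ B).ncard = A.ncard * B.ncard := by
  rw [← Nat.card_coe_set_eq, ← Nat.card_coe_set_eq, ← Nat.card_coe_set_eq,
    ← Nat.card_prod]
  exact Nat.card_congr (Equiv.Set.prod A B)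

theorem hkOn_smash (h0M : (0 : M) ≠ infty) (h0P : (0 : P) ≠ infty) (q : ℕ) :
    hkOn (plusSet (Smash M P)) q = hkOn (plusSet M) q * hkOn (plusSet P) q := by
  classical
  set A := (frob q (plusSet M))ᶜ with hA
  set B := (frob q (plusSet P))ᶜ with hB
  have key : (frob q (plusSet (Smash M P)))ᶜ = (fun z : M × P => Smash.mk z.1 z.2) '' (A ×ˢ B) := by
    ext z
    constructor
    · intro hz
      obtain ⟨m, p, rfl⟩ := Smash.mk_surjective z
      have : ¬(m ∈ frob q (plusSet M) ∨ p ∈ frob q (plusSet P)) := by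
        rw [← Smash.mk_mem_frob_iff h0M h0P]; exact hz
      push_neg at this
      exact ⟨(m, p), ⟨this.1, this.2⟩, rfl⟩
    · rintro ⟨⟨m, p⟩, ⟨hm, hp⟩, rfl⟩
      rw [Set.mem_compl_iff, Smash.mk_mem_frob_iff h0M h0P]
      rintro (h | h)
      exacts [hm h, hp h]
  have hinj : Set.InjOn (fun z : M × P => Smash.mk z.1 z.2) (A ×ˢ B) := by
    rintro ⟨m, p⟩ ⟨hm, hp⟩ ⟨m', p'⟩ ⟨hm', hp'⟩ h
    simp only at h
    rw [Smash.mk_eq_mk] at h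
    rcases h with ⟨rfl, rfl⟩ | ⟨h1, _⟩
    · rfl
    · rcases h1 with h1 | h1
      · exact absurd ((show m = infty from h1) ▸ infty_mem_frob q (plusSet M)) hm
      · exact absurd ((show p = infty from h1) ▸ infty_mem_frob q (plusSet P)) hp
  rw [hkOn, key, Set.ncard_image_of_injOn hinj, ncard_prod_set]
  rfl

end Aux3
section Aux4
variable {N : Type*} [Binoid N]

theorem strictMono_fin_le {n : ℕ} {g : Fin (n + 1) → ℕ} (h : StrictMono g) :
    n ≤ g (Fin.last n) := by
  have key : ∀ k (hk : k < n + 1), k ≤ g ⟨k, hk⟩ := by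
    intro k
    induction k with
    | zero => intro _; exact Nat.zero_le _
    | succ m ih =>
      intro hk
      have h1 : m < n + 1 := Nat.lt_of_succ_lt hk
      have h2 : (⟨m, h1⟩ : Fin (n + 1)) < ⟨m + 1, hk⟩ := by
        simp [Fin.lt_def]
      exact Nat.succ_le_of_lt (lt_of_le_of_lt (ih h1) (h h2))
  exact key n (Nat.lt_succ_self n)

theorem zero_not_mem_prime {p : Set N} (hp : IsPrime p) : (0 : N) ∉ p := by
  intro h0
  apply hp.2.1
  ext x
  simp only [Set.mem_univ, iff_true]
  have := hp.1.2 0 h0 x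
  rwa [add_zero] at this

theorem infty_mem_prime {p : Set N} (hp : IsPrime p) : (infty : N) ∈ p := hp.1.1

/-- Elements outside a prime generated by the generators outside the prime. -/
theorem mem_closure_compl_prime {p : Set N} (hp : IsPrime p) {S : Set N} {a : N}
    (ha : a ∈ AddSubmonoid.closure S) (hap : a ∉ p) :
    a ∈ AddSubmonoid.closure {g ∈ S | g ∉ p} := by
  induction ha using AddSubmonoid.closure_induction with
  | mem x hx => exact AddSubmonoid.subset_closure ⟨hx, hap⟩
  | zero => exact AddSubmonoid.zero_mem _
  | add x y hx hy ihx ihy =>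
    have hx' : x ∉ p := fun h => hap (by
      have := hp.1.2 x h y
      rwa [add_comm] at this)
    have hy' : y ∉ p := fun h => hap (hp.1.2 y h x)
    exact AddSubmonoid.add_mem _ (ihx hx') (ihy hy')

/-- The complement of a prime ideal is an additive submonoid. -/
def primeCompl {p : Set N} (hp : IsPrime p) : AddSubmonoid N where
  carrier := pᶜ
  zero_mem' := zero_not_mem_prime hp
  add_mem' := fun ha hb => hp.2.2 _ _ ha hb

/-- In a finitely generated binoid, the length of any chain of primes is at most
the number of generators. -/
theorem dimSet_le_card {s : Finset N} (hs : AddSubmonoid.closure (s : Set N) = ⊤)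
    {n : ℕ} (hn : n ∈ dimSet N) : n ≤ s.card := by
  classical
  obtain ⟨c, hc, hmono⟩ := hn
  set f : Fin (n + 1) → Finset N := fun i => s.filter (· ∈ c i) with hf
  have hfmono : StrictMono f := by
    intro i j hij
    have hsub : c i ⊆ c j := (hmono hij).le
    have hne : c i ≠ c j := ne_of_lt (hmono hij)
    show f i ⊂ f j
    rw [Finset.ssubset_iff_of_subset]
    · obtain ⟨a, haj, hai⟩ := Set.exists_of_ssubset (hmono hij)
      have hacl : a ∈ AddSubmonoid.closure (s : Set N) := hs ▸ AddSubmonoid.mem_top a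
      have := mem_closure_compl_prime (hc i) hacl hai
      -- if all generators outside `c i` were outside `c j`, then `a ∉ c j`
      by_contra hcon
      push_neg at hcon
      have hsub2 : {g ∈ (s : Set N) | g ∉ c i} ⊆ (primeCompl (hc j) : Set N) := by
        rintro g ⟨hg1, hg2⟩
        intro hgj
        have hgi : g ∈ f j := Finset.mem_filter.2 ⟨hg1, hgj⟩
        obtain hgi' := Finset.mem_filter.1 (hcon g hgi)
        exact hg2 hgi'.2
      have : a ∈ (primeCompl (hc j) : Set N) :=
        (AddSubmonoid.closure_le.2 hsub2) this
      exact this haj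
    · intro g hg
      obtain ⟨hg1, hg2⟩ := Finset.mem_filter.1 hg
      exact Finset.mem_filter.2 ⟨hg1, hsub hg2⟩
  have := strictMono_fin_le (fun i j hij => Finset.card_lt_card (hfmono hij))
  calc n ≤ (f (Fin.last n)).card := this
    _ ≤ s.card := Finset.card_le_card (Finset.filter_subset _ _)

theorem bddAbove_dimSet (hfg : FG N) : BddAbove (dimSet N) := by
  obtain ⟨s, hs⟩ := hfg
  exact ⟨s.card, fun n hn => dimSet_le_card hs hn⟩

theorem plusSet_isPrime (h0 : (0 : N) ≠ infty) : IsPrime (plusSet N) := by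
  refine ⟨⟨infty_not_unit h0, ?_⟩, ?_, ?_⟩
  · rintro a ha n hna
    obtain ⟨b, hb⟩ := hna
    exact ha ⟨n + b, by rw [← hb]; abel⟩
  · intro h
    have : (0 : N) ∈ plusSet N := h ▸ Set.mem_univ 0
    exact this ⟨0, add_zero 0⟩
  · rintro a b ha hb hab
    rw [plusSet, Set.mem_compl_iff, not_not] at ha hb
    obtain ⟨a', ha'⟩ := ha
    obtain ⟨b', hb'⟩ := hb
    exact hab ⟨a' + b', by rw [show a + b + (a' + b') = (a + a') + (b + b') by abel, ha', hb', add_zero]⟩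

theorem zero_mem_dimSet (h0 : (0 : N) ≠ infty) : 0 ∈ dimSet N := by
  refine ⟨fun _ => plusSet N, fun _ => plusSet_isPrime h0, ?_⟩
  intro a b hab
  have ha := a.isLt
  have hb := b.isLt
  have : (a : ℕ) < (b : ℕ) := hab
  omega

theorem dim_mem_dimSet (h0 : (0 : N) ≠ infty) (hfg : FG N) : dim N ∈ dimSet N :=
  Nat.sSup_mem ⟨0, zero_mem_dimSet h0⟩ (bddAbove_dimSet hfg)

end Aux4
section Aux5
variable {N : Type*} [Binoid N]

/-- Lengths of chains of primes ending at `p`. -/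
def htSet (p : Set N) : Set ℕ :=
  {k | ∃ c : Fin (k + 1) → Set N, (∀ i, IsPrime (c i)) ∧ StrictMono c ∧ c (Fin.last k) = p}

/-- The height of a prime ideal. -/
noncomputable def ht (p : Set N) : ℕ := sSup (htSet p)

theorem htSet_subset_dimSet (p : Set N) : htSet p ⊆ dimSet N := by
  rintro k ⟨c, hc, hmono, _⟩
  exact ⟨c, hc, hmono⟩

theorem zero_mem_htSet {p : Set N} (hp : IsPrime p) : 0 ∈ htSet p := by
  refine ⟨fun _ => p, fun _ => hp, ?_, rfl⟩
  intro a b hab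
  have ha := a.isLt
  have hb := b.isLt
  have : (a : ℕ) < (b : ℕ) := hab
  omega

theorem bddAbove_htSet (hfg : FG N) (p : Set N) : BddAbove (htSet p) :=
  (bddAbove_dimSet hfg).mono (htSet_subset_dimSet p)

theorem ht_mem_htSet (hfg : FG N) {p : Set N} (hp : IsPrime p) : ht p ∈ htSet p :=
  Nat.sSup_mem ⟨0, zero_mem_htSet hp⟩ (bddAbove_htSet hfg p)

theorem ht_le_dim (hfg : FG N) {p : Set N} (hp : IsPrime p) : ht p ≤ dim N :=
  le_csSup (bddAbove_dimSet hfg) (htSet_subset_dimSet p (ht_mem_htSet hfg hp))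

theorem ht_lt_ht (hfg : FG N) {p p' : Set N} (hp : IsPrime p) (hp' : IsPrime p')
    (hss : p ⊂ p') : ht p < ht p' := by
  obtain ⟨c, hc, hmono, hlast⟩ := ht_mem_htSet hfg hp
  have hmem : ht p + 1 ∈ htSet p' := by
    refine ⟨fun i => if h : i.val < ht p + 1 then c ⟨i.val, h⟩ else p', fun i => ?_, ?_, ?_⟩
    · dsimp only
      split
      · exact hc _
      · exact hp'
    · rw [Fin.strictMono_iff_lt_succ]
      intro i
      have hi := i.isLt
      dsimp only [Fin.coe_castSucc, Fin.val_succ]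
      by_cases h : i.val + 1 < ht p + 1
      · rw [dif_pos (by omega : i.val < ht p + 1), dif_pos h]
        exact hmono (by simp [Fin.lt_def])
      · rw [dif_pos (by omega : i.val < ht p + 1), dif_neg h]
        have h2 : i.val = ht p := by omega
        have he : (⟨i.val, by omega⟩ : Fin (ht p + 1)) = Fin.last (ht p) := by
          simp [Fin.ext_iff, h2]
        rw [he, hlast]
        exact hss
    · dsimp only [Fin.val_last]
      rw [dif_neg (lt_irrefl _)]
  exact lt_of_lt_of_le (Nat.lt_succ_self _) (le_csSup (bddAbove_htSet hfg p') hmem)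

theorem ht_le_ht (hfg : FG N) {p p' : Set N} (hp : IsPrime p) (hp' : IsPrime p')
    (hsub : p ⊆ p') : ht p ≤ ht p' := by
  rcases eq_or_ne p p' with rfl | hne
  · exact le_rfl
  · exact (ht_lt_ht hfg hp hp' (HasSubset.Subset.ssubset_of_ne hsub hne)).le

end Aux5
section Aux6
variable {M P : Type*} [Binoid M] [Binoid P]

/-- The prime of the smash product associated to a pair of primes. -/
def smashPrime (p : Set M) (r : Set P) : Set (Smash M P) :=
  {z | ∃ m n, z = Smash.mk m n ∧ (m ∈ p ∨ n ∈ r)}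

theorem mem_smashPrime {p : Set M} {r : Set P} (hp : IsPrime p) (hr : IsPrime r)
    {m : M} {n : P} :
    Smash.mk m n ∈ smashPrime p r ↔ m ∈ p ∨ n ∈ r := by
  constructor
  · rintro ⟨m', n', heq, h⟩
    rw [Smash.mk_eq_mk] at heq
    rcases heq with ⟨rfl, rfl⟩ | ⟨h1, _⟩
    · exact h
    · rcases h1 with h1 | h1
      · exact Or.inl ((show m = infty from h1) ▸ infty_mem_prime hp)
      · exact Or.inr ((show n = infty from h1) ▸ infty_mem_prime hr)
  · intro h
    exact ⟨m, n, rfl, h⟩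

theorem smashPrime_isPrime {p : Set M} {r : Set P} (hp : IsPrime p) (hr : IsPrime r) :
    IsPrime (smashPrime p r) := by
  refine ⟨⟨?_, ?_⟩, ?_, ?_⟩
  · rw [Smash.infty_def, mem_smashPrime hp hr]
    exact Or.inl (infty_mem_prime hp)
  · rintro a ha z
    obtain ⟨m, n, rfl⟩ := Smash.mk_surjective a
    obtain ⟨m', n', rfl⟩ := Smash.mk_surjective z
    rw [mem_smashPrime hp hr] at ha
    rw [Smash.mk_add, mem_smashPrime hp hr]
    rcases ha with ha | ha
    · exact Or.inl (hp.1.2 _ ha _)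
    · exact Or.inr (hr.1.2 _ ha _)
  · intro h
    have h0 : (0 : Smash M P) ∈ smashPrime p r := h ▸ Set.mem_univ _
    rw [Smash.zero_def, mem_smashPrime hp hr] at h0
    rcases h0 with h0 | h0
    · exact zero_not_mem_prime hp h0
    · exact zero_not_mem_prime hr h0
  · intro a b ha hb hab
    obtain ⟨m, n, rfl⟩ := Smash.mk_surjective a
    obtain ⟨m', n', rfl⟩ := Smash.mk_surjective b
    rw [mem_smashPrime hp hr] at ha hb
    rw [Smash.mk_add, mem_smashPrime hp hr] at hab
    push_neg at ha hb
    rcases hab with h | h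
    · exact hp.2.2 _ _ ha.1 hb.1 h
    · exact hr.2.2 _ _ ha.2 hb.2 h

theorem smashPrime_subset {p p' : Set M} {r r' : Set P} (h1 : p ⊆ p') (h2 : r ⊆ r') :
    smashPrime p r ⊆ smashPrime p' r' := by
  rintro z ⟨m, n, rfl, h⟩
  exact ⟨m, n, rfl, h.imp (@h1 m) (@h2 n)⟩

theorem smashPrime_ssubset_left {p p' : Set M} {r : Set P} (hp : IsPrime p)
    (hp' : IsPrime p') (hr : IsPrime r) (h : p ⊂ p') :
    smashPrime p r ⊂ smashPrime p' r := by
  refine ⟨smashPrime_subset h.1 le_rfl, fun hsub => ?_⟩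
  obtain ⟨a, ha', ha⟩ := Set.exists_of_ssubset h
  have : Smash.mk a (0 : P) ∈ smashPrime p' r := (mem_smashPrime hp' hr).2 (Or.inl ha')
  have hmem := hsub this
  rw [mem_smashPrime hp hr] at hmem
  rcases hmem with hmem | hmem
  · exact ha hmem
  · exact zero_not_mem_prime hr hmem

theorem smashPrime_ssubset_right {p : Set M} {r r' : Set P} (hp : IsPrime p)
    (hr : IsPrime r) (hr' : IsPrime r') (h : r ⊂ r') :
    smashPrime p r ⊂ smashPrime p r' := by
  refine ⟨smashPrime_subset le_rfl h.1, fun hsub => ?_⟩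
  obtain ⟨a, ha', ha⟩ := Set.exists_of_ssubset h
  have : Smash.mk (0 : M) a ∈ smashPrime p r' := (mem_smashPrime hp hr').2 (Or.inr ha')
  have hmem := hsub this
  rw [mem_smashPrime hp hr] at hmem
  rcases hmem with hmem | hmem
  · exact zero_not_mem_prime hp hmem
  · exact ha hmem

/-- Lower bound : sum of chain lengths is a chain length in the smash product. -/
theorem add_mem_dimSet_smash {dM dN : ℕ} (hdM : dM ∈ dimSet M) (hdN : dN ∈ dimSet P) :
    dM + dN ∈ dimSet (Smash M P) := by
  obtain ⟨c, hc, hcmono⟩ := hdM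
  obtain ⟨d, hd, hdmono⟩ := hdN
  refine ⟨fun k => smashPrime (c ⟨min k.val dM, by omega⟩)
      (d ⟨k.val - dM, by have := k.isLt; omega⟩), fun k => ?_, ?_⟩
  · exact smashPrime_isPrime (hc _) (hd _)
  · rw [Fin.strictMono_iff_lt_succ]
    intro i
    have hi := i.isLt
    dsimp only [Fin.coe_castSucc, Fin.val_succ]
    by_cases h : i.val < dM
    · have e1 : min i.val dM = i.val := by omega
      have e2 : min (i.val + 1) dM = i.val + 1 := by omega
      have e3 : i.val - dM = 0 := by omega
      have e4 : i.val + 1 - dM = 0 := by omega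
      simp only [e1, e2, e3, e4]
      exact smashPrime_ssubset_left (hc _) (hc _) (hd _)
        (hcmono (show (⟨i.val, by omega⟩ : Fin (dM + 1)) < ⟨i.val + 1, by omega⟩ by
          simp [Fin.lt_def]))
    · have e1 : min i.val dM = dM := by omega
      have e2 : min (i.val + 1) dM = dM := by omega
      simp only [e1, e2]
      exact smashPrime_ssubset_right (hc _) (hd _) (hd _)
        (hdmono (show (⟨i.val - dM, by omega⟩ : Fin (dN + 1)) < ⟨i.val + 1 - dM, by omega⟩ by
          simp [Fin.lt_def]; omega))

end Aux6
section Aux7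
variable {M P : Type*} [Binoid M] [Binoid P]

theorem mk_zero_add_mk_zero (m m' : M) :
    Smash.mk m (0 : P) + Smash.mk m' (0 : P) = Smash.mk (m + m') (0 : P) := by
  rw [Smash.mk_add, add_zero]

theorem zero_mk_add_zero_mk (w w' : P) :
    Smash.mk (0 : M) w + Smash.mk (0 : M) w' = Smash.mk (0 : M) (w + w') := by
  rw [Smash.mk_add, add_zero]

theorem dimSet_smash_le (hfgM : FG M) (hfgP : FG P) {n : ℕ}
    (hn : n ∈ dimSet (Smash M P)) : n ≤ dim M + dim P := by
  obtain ⟨e, he, hmono⟩ := hn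
  set pf : Fin (n + 1) → Set M := fun i => {m | Smash.mk m (0 : P) ∈ e i} with hpfdef
  set rf : Fin (n + 1) → Set P := fun i => {w | Smash.mk (0 : M) w ∈ e i} with hrfdef
  have hpf : ∀ i, IsPrime (pf i) := by
    intro i
    refine ⟨⟨?_, ?_⟩, ?_, ?_⟩
    · show Smash.mk (infty : M) (0 : P) ∈ e i
      rw [Smash.mk_eq_infty (Or.inl rfl)]
      exact infty_mem_prime (he i)
    · intro a ha w
      show Smash.mk (w + a) (0 : P) ∈ e i
      rw [← mk_zero_add_mk_zero]
      exact (he i).1.2 _ ha _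
    · intro h
      have h0 : (0 : M) ∈ pf i := h ▸ Set.mem_univ _
      have : (0 : Smash M P) ∈ e i := by rw [Smash.zero_def]; exact h0
      exact zero_not_mem_prime (he i) this
    · intro a b ha hb hab
      have hab' : Smash.mk (a + b) (0 : P) ∈ e i := hab
      rw [← mk_zero_add_mk_zero] at hab'
      exact (he i).2.2 _ _ ha hb hab'
  have hrf : ∀ i, IsPrime (rf i) := by
    intro i
    refine ⟨⟨?_, ?_⟩, ?_, ?_⟩
    · show Smash.mk (0 : M) (infty : P) ∈ e i
      rw [Smash.mk_eq_infty (Or.inr rfl)]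
      exact infty_mem_prime (he i)
    · intro a ha w
      show Smash.mk (0 : M) (w + a) ∈ e i
      rw [← zero_mk_add_zero_mk]
      exact (he i).1.2 _ ha _
    · intro h
      have h0 : (0 : P) ∈ rf i := h ▸ Set.mem_univ _
      have : (0 : Smash M P) ∈ e i := by rw [Smash.zero_def]; exact h0
      exact zero_not_mem_prime (he i) this
    · intro a b ha hb hab
      have hab' : Smash.mk (0 : M) (a + b) ∈ e i := hab
      rw [← zero_mk_add_zero_mk] at hab'
      exact (he i).2.2 _ _ ha hb hab'
  have hrep : ∀ (i) (m : M) (w : P), Smash.mk m w ∈ e i ↔ m ∈ pf i ∨ w ∈ rf i := by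
    intro i m w
    constructor
    · intro h
      by_contra hcon
      push_neg at hcon
      have h1 : Smash.mk m (0 : P) ∉ e i := hcon.1
      have h2 : Smash.mk (0 : M) w ∉ e i := hcon.2
      have := (he i).2.2 _ _ h1 h2
      rw [Smash.mk_add, add_zero, zero_add] at this
      exact this h
    · rintro (h | h)
      · have : Smash.mk (0 : M) w + Smash.mk m (0 : P) ∈ e i := (he i).1.2 _ h _
        rwa [Smash.mk_add, add_zero, zero_add] at this
      · have : Smash.mk m (0 : P) + Smash.mk (0 : M) w ∈ e i := (he i).1.2 _ h _
        rwa [Smash.mk_add, add_zero, zero_add] at this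
  have hstep : ∀ i j : Fin (n + 1), e i ⊂ e j →
      ht (pf i) + ht (rf i) < ht (pf j) + ht (rf j) := by
    intro i j hij
    have hpsub : pf i ⊆ pf j := fun m hm => hij.1 hm
    have hrsub : rf i ⊆ rf j := fun w hw => hij.1 hw
    have hne : pf i ≠ pf j ∨ rf i ≠ rf j := by
      by_contra hcon
      push_neg at hcon
      apply hij.2
      intro z hz
      obtain ⟨m, w, rfl⟩ := Smash.mk_surjective z
      rw [hrep j] at hz
      rw [hrep i, hcon.1, hcon.2]
      exact hz
    rcases hne with hne | hne
    · have h1 := ht_lt_ht hfgM (hpf i) (hpf j) (HasSubset.Subset.ssubset_of_ne hpsub hne)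
      have h2 := ht_le_ht hfgP (hrf i) (hrf j) hrsub
      omega
    · have h1 := ht_le_ht hfgM (hpf i) (hpf j) hpsub
      have h2 := ht_lt_ht hfgP (hrf i) (hrf j) (HasSubset.Subset.ssubset_of_ne hrsub hne)
      omega
  have hH : StrictMono (fun i : Fin (n + 1) => ht (pf i) + ht (rf i)) :=
    fun i j hij => hstep i j (hmono hij)
  have := strictMono_fin_le hH
  have hle1 := ht_le_dim hfgM (hpf (Fin.last n))
  have hle2 := ht_le_dim hfgP (hrf (Fin.last n))
  omega

theorem zero_ne_infty_smash (h0M : (0 : M) ≠ infty) (h0P : (0 : P) ≠ infty) :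
    (0 : Smash M P) ≠ infty := by
  rw [Smash.zero_def, Smash.infty_def, Ne, Smash.mk_eq_mk]
  rintro (⟨h, -⟩ | ⟨h, -⟩)
  · exact h0M h
  · rcases h with h | h
    · exact h0M h
    · exact h0P h

theorem dim_smash (h0M : (0 : M) ≠ infty) (h0P : (0 : P) ≠ infty)
    (hfgM : FG M) (hfgP : FG P) : dim (Smash M P) = dim M + dim P := by
  apply le_antisymm
  · exact csSup_le ⟨0, zero_mem_dimSet (zero_ne_infty_smash h0M h0P)⟩
      (fun n hn => dimSet_smash_le hfgM hfgP hn)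
  · exact le_csSup ⟨dim M + dim P, fun n hn => dimSet_smash_le hfgM hfgP hn⟩
      (add_mem_dimSet_smash (dim_mem_dimSet h0M hfgM) (dim_mem_dimSet h0P hfgP))

end Aux7
section Aux8
variable {N : Type*} [Binoid N]

theorem degenerate_hkOn (h0 : (0 : N) = infty) (q : ℕ) : hkOn (plusSet N) q = 0 := by
  have hall : ∀ x : N, x = infty := fun x => by
    rw [← add_zero x, h0, add_infty]
  have : (frob q (plusSet N))ᶜ = ∅ := by
    ext x
    simp only [Set.mem_compl_iff, Set.mem_empty_iff_false, iff_false, not_not]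
    exact hall x ▸ infty_mem_frob q _
  rw [hkOn, this, Set.ncard_empty]

theorem degenerate_isHKMult (h0 : (0 : N) = infty) : IsHKMult N 0 := by
  have : (fun q : ℕ => (hkOn (plusSet N) q : ℝ) / (q : ℝ) ^ dim N) = fun _ => 0 := by
    funext q
    rw [degenerate_hkOn h0 q]
    simp
  unfold IsHKMult IsHKMultOn
  rw [this]
  exact tendsto_const_nhds

theorem degenerate_isHKMult_val (h0 : (0 : N) = infty) {L : ℝ} (hL : IsHKMult N L) :
    L = 0 :=
  tendsto_nhds_unique hL (degenerate_isHKMult h0)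

end Aux8

theorem hk_multiplicity_smash'
    {M N : Type*} [Binoid M] [Binoid N]
    (hfgM : FG M) (hspM : Semipositive M) (hfgN : FG N) (hspN : Semipositive N)
    (LM LN : ℝ) (hM : IsHKMult M LM) (hN : IsHKMult N LN) :
    IsHKMult (Smash M N) (LM * LN) := by
  by_cases h0M : (0 : M) = infty
  · have hLM : LM = 0 := degenerate_isHKMult_val h0M hM
    have h0S : (0 : Smash M N) = infty := by
      rw [Smash.zero_def]; exact Smash.mk_eq_infty (Or.inl h0M)
    rw [hLM, zero_mul]
    exact degenerate_isHKMult h0S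
  by_cases h0N : (0 : N) = infty
  · have hLN : LN = 0 := degenerate_isHKMult_val h0N hN
    have h0S : (0 : Smash M N) = infty := by
      rw [Smash.zero_def]; exact Smash.mk_eq_infty (Or.inr h0N)
    rw [hLN, mul_zero]
    exact degenerate_isHKMult h0S
  -- main case
  unfold IsHKMult IsHKMultOn at hM hN ⊢
  rw [dim_smash h0M h0N hfgM hfgN]
  refine (hM.mul hN).congr' ?_
  filter_upwards [Filter.eventually_ge_atTop 1] with q hq
  have hq0 : (q : ℝ) ≠ 0 := by
    have : (1 : ℝ) ≤ (q : ℝ) := by exact_mod_cast hq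
    linarith
  rw [hkOn_smash h0M h0N q]
  push_cast
  rw [pow_add, div_mul_div_comm]


end Binoid

open Binoid

/-- **Statement 6.** Let `M` and `N` be finitely generated semipositive binoids such that
`e_HK(M)` and `e_HK(N)` exist. Then `e_HK(M∧N)` exists and
`e_HK(M∧N) = e_HK(M)·e_HK(N)`. -/
theorem hk_multiplicity_smash
    {M N : Type*} [Binoid M] [Binoid N]
    (hfgM : FG M) (hspM : Semipositive M) (hfgN : FG N) (hspN : Semipositive N)
    (LM LN : ℝ) (hM : IsHKMult M LM) (hN : IsHKMult N LN) :
    IsHKMult (Smash M N) (LM * LN) :=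
  Binoid.hk_multiplicity_smash' hfgM hspM hfgN hspN LM LN hM hN
end
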